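/- If B is compact and B ⊆ A + int(C), then there exists a 0-neighborhood U such that B + U ⊆ A + C. That is, for compact B, A < B implies A ≪ B. -/

import Mathlib

open Pointwise Set

theorem stmt_2 {Y : Type*} [AddCommGroup Y] [Module ℝ Y] [TopologicalSpace Y]
    [IsTopologicalAddGroup Y] [ContinuousSMul ℝ Y] [LocallyConvexSpace ℝ Y] [T2Space Y]
    (C : Set Y) (hclosed : IsClosed C) (hconv : Convex ℝ C)
    (hcone : ∀ c ∈ C, ∀ r : ℝ, 0 ≤ r → r • c ∈ C)
    (hint : (interior C).Nonempty) (A B : Set Y)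
    (hBcpt : IsCompact B) (hlt : B ⊆ A + interior C) :
    ∃ U ∈ nhds (0 : Y), B + U ⊆ A + C := by
  have key : ∀ b ∈ B, ∃ W ∈ nhds (0 : Y),
      ∀ w ∈ W, ∀ u ∈ W, b + w + u ∈ A + C := by
    intro b hb
    obtain ⟨a, ha, c, hc, habc⟩ := hlt hb
    -- interior C is a nhd of c; pull back along (c + ·)
    have hV : (fun x => c + x) ⁻¹' interior C ∈ nhds (0 : Y) := by
      apply (continuous_const.add continuous_id).continuousAt.preimage_mem_nhds
      simpa using isOpen_interior.mem_nhds hc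
    obtain ⟨W, hW, hWW⟩ := exists_nhds_zero_half hV
    refine ⟨W, hW, fun w hw u hu => ?_⟩
    have hmem : c + (w + u) ∈ C := interior_subset (hWW w hw u hu)
    refine ⟨a, ha, c + (w + u), hmem, ?_⟩
    rw [← habc]; beta_reduce; abel
  choose! W hW hWsub using key
  have hcover : ∀ b ∈ B, b +ᵥ W b ∈ nhds b := by
    intro b hb
    have := vadd_mem_nhds_vadd b (hW b hb)
    simpa using this
  obtain ⟨t, htB, htcov⟩ := hBcpt.elim_nhds_subcover (fun b => b +ᵥ W b) hcover
  refine ⟨⋂ b ∈ t, W b, ?_, ?_⟩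
  · exact (Filter.biInter_finset_mem t).2 fun b hb => hW b (htB b hb)
  · rintro x ⟨b', hb', u, hu, rfl⟩
    obtain ⟨b, hbt, hb'mem⟩ := Set.mem_iUnion₂.1 (htcov hb')
    obtain ⟨w, hw, rfl⟩ := hb'mem
    have hu' : u ∈ W b := by
      exact Set.mem_iInter₂.1 hu b hbt
    have := hWsub b (htB b hbt) w hw u hu'
    simpa [add_assoc, vadd_eq_add] using this
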